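/- (Mean-field bound for parallel retrieval in the HHM.) For every p ≥ 1, β > 0, σ ∈ (1/2,1), fields h ∈ ℝ^p and all m_1, m_2 ∈ [−1,1]^p, the thermodynamic-limit quenched free energy satisfies f(β,h,σ,p) ≥ log 2 + (1/2)·2^{−p} Σ_{ξ∈{−1,1}^p} log cosh(β Σ_{μ=1}^p (h_μ + C_{2σ−1} m_{1,μ}) ξ_μ) + (1/2)·2^{−p} Σ_{ξ∈{−1,1}^p} log cosh(β Σ_{μ=1}^p (h_μ + C_{2σ−1} m_{2,μ}) ξ_μ) − (β C_{2σ−1}/2) Σ_{μ=1}^p (m_{1,μ}² + m_{2,μ}²)/2. -/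

import Mathlib

open Real Filter

/-- The ±1 value of a Boolean spin. -/
noncomputable def spin (b : Bool) : ℝ := if b then 1 else -1

/-- Embedding of the first half of the sites. -/
def finLeft {k : ℕ} (i : Fin (2 ^ k)) : Fin (2 ^ (k + 1)) :=
  ⟨i.1, lt_of_lt_of_le i.2 (Nat.pow_le_pow_right (by norm_num) (Nat.le_succ k))⟩

/-- Embedding of the second half of the sites. -/
def finRight {k : ℕ} (i : Fin (2 ^ k)) : Fin (2 ^ (k + 1)) :=
  ⟨i.1 + 2 ^ k, by
    have h2 : 2 ^ (k + 1) = 2 ^ k + 2 ^ k := by rw [pow_succ]; ring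
    have := i.2; omega⟩

/-- The hierarchical Hopfield model Hamiltonian, defined recursively; `p` is the number
of patterns, `ξ` the pattern assignment, and the double sum over sites includes `i = j`. -/
noncomputable def hopH (σ : ℝ) (p : ℕ) :
    (k : ℕ) → (Fin (2 ^ k) → Bool) → (Fin p → Fin (2 ^ k) → Bool) → ℝ
  | 0, _, _ => 0
  | (k + 1), S, ξ =>
      hopH σ p k (fun i => S (finLeft i)) (fun μ i => ξ μ (finLeft i)) +
        hopH σ p k (fun i => S (finRight i)) (fun μ i => ξ μ (finRight i)) -
        1 / (2 * (2 : ℝ) ^ (2 * σ * ((k : ℝ) + 1))) *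
          ∑ μ : Fin p, ∑ i : Fin (2 ^ (k + 1)), ∑ j : Fin (2 ^ (k + 1)),
            spin (ξ μ i) * spin (ξ μ j) * spin (S i) * spin (S j)

/-- The quenched free energy of the hierarchical Hopfield model with external fields `h`:
the uniform average over the `2^(p·2^k)` pattern assignments of the log partition function,
divided by the number `2^k` of spins. -/
noncomputable def hopF (β σ : ℝ) (p : ℕ) (h : Fin p → ℝ) (k : ℕ) : ℝ :=
  ((2 : ℝ) ^ k)⁻¹ * (((2 : ℝ) ^ (p * 2 ^ k))⁻¹ *
    ∑ ξ : Fin p → Fin (2 ^ k) → Bool,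
      Real.log (∑ S : Fin (2 ^ k) → Bool,
        Real.exp (-β * hopH σ p k S ξ + β * ∑ μ, h μ * ∑ i, spin (ξ μ i) * spin (S i))))

/-- The constant `C_y = 2^{-y} / (1 - 2^{-y})`. -/
noncomputable def Cconst (y : ℝ) : ℝ := (2 : ℝ) ^ (-y) / (1 - (2 : ℝ) ^ (-y))


section Aux

lemma elim_bij {k : ℕ} : Function.Bijective (Sum.elim (finLeft (k := k)) finRight) := by
  rw [Fintype.bijective_iff_injective_and_card]
  constructor
  · rintro (a | a) (b | b) hab <;>
      simp only [Sum.elim_inl, Sum.elim_inr, finLeft, finRight, Fin.mk.injEq] at hab <;>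
      first
        | (exact congrArg Sum.inl (Fin.ext hab))
        | (exact congrArg Sum.inr (by omega))
        | (exact absurd hab (by have := a.2; have := b.2; omega))
  · simp [Fintype.card_sum, pow_succ]; ring

lemma sum_split {k : ℕ} (f : Fin (2 ^ (k + 1)) → ℝ) :
    ∑ j, f j = ∑ i : Fin (2 ^ k), f (finLeft i) + ∑ i : Fin (2 ^ k), f (finRight i) := by
  rw [← Fintype.sum_bijective _ elim_bij (fun x => f (Sum.elim finLeft finRight x)) f
    (fun x => rfl), Fintype.sum_sum_type]
  rfl

lemma sum_exp_spin {n : ℕ} (φ : Fin n → ℝ) :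
    ∑ S : Fin n → Bool, Real.exp (∑ i, φ i * spin (S i)) =
      ∏ i : Fin n, (2 * Real.cosh (φ i)) := by
  have : ∀ i : Fin n, (2 * Real.cosh (φ i)) = ∑ b : Bool, Real.exp (φ i * spin b) := by
    intro i
    simp [spin, Real.cosh_eq, Fintype.sum_bool]
    ring
  simp_rw [this, Finset.prod_univ_sum, Fintype.piFinset_univ, ← Real.exp_sum]

def siteEquiv (p N : ℕ) (j : Fin N) :
    (Fin p → Fin N → Bool) ≃ ((Fin p → Bool) × (Fin p → {i : Fin N // i ≠ j} → Bool)) :=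
  (Equiv.piCongrRight (fun _ => Equiv.piSplitAt j (fun _ => Bool))).trans
    (Equiv.arrowProdEquivProdArrow _ _ _)

lemma avg_site {p N : ℕ} (j : Fin N) (G : (Fin p → Bool) → ℝ) :
    ∑ ξ : Fin p → Fin N → Bool, G (fun μ => ξ μ j) =
      2 ^ (p * (N - 1)) * ∑ η : Fin p → Bool, G η := by
  have e1 : (∑ ξ : Fin p → Fin N → Bool, G fun μ => ξ μ j) =
      ∑ x : (Fin p → Bool) × (Fin p → {i : Fin N // i ≠ j} → Bool), G x.1 :=
    Fintype.sum_equiv (siteEquiv p N j) _ _ (fun ξ => rfl)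
  have hc : Fintype.card (Fin p → { i : Fin N // i ≠ j } → Bool) = 2 ^ (p * (N - 1)) := by
    simp [Fintype.card_fun, Fintype.card_subtype_compl, ← pow_mul, mul_comm]
  rw [e1, Fintype.sum_prod_type]
  simp only [Finset.sum_const, Finset.card_univ, nsmul_eq_mul, hc]
  rw [← Finset.mul_sum]
  push_cast
  ring

lemma double_sum_sq {p n : ℕ} (ξ : Fin p → Fin n → Bool) (S : Fin n → Bool) (μ : Fin p) :
    ∑ i : Fin n, ∑ j : Fin n,
        spin (ξ μ i) * spin (ξ μ j) * spin (S i) * spin (S j) =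
      (∑ i : Fin n, spin (ξ μ i) * spin (S i)) ^ 2 := by
  rw [sq, Finset.sum_mul_sum]
  apply Finset.sum_congr rfl; intro i _; apply Finset.sum_congr rfl; intro j _; ring

noncomputable def crate (σ : ℝ) : ℝ := (2:ℝ) ^ ((1:ℝ) - 2*σ)

noncomputable def cpart (σ : ℝ) (k : ℕ) : ℝ := ∑ l ∈ Finset.range k, crate σ ^ (l+1)

lemma crate_pow (σ : ℝ) (k : ℕ) :
    crate σ ^ (k+1) = (2:ℝ)^(k+1) / (2:ℝ) ^ (2*σ*((k:ℝ)+1)) := by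
  rw [crate, ← Real.rpow_natCast ((2:ℝ) ^ ((1:ℝ)-2*σ)) (k+1),
    ← Real.rpow_natCast (2:ℝ) (k+1), ← Real.rpow_mul (by norm_num)]
  rw [show ((1:ℝ)-2*σ) * ((k+1:ℕ):ℝ) = ((k+1:ℕ):ℝ) - 2*σ*((k:ℝ)+1) by push_cast; ring]
  rw [Real.rpow_sub (by norm_num)]

lemma lemA (σ : ℝ) (p : ℕ) (m : Fin p → ℝ) :
    ∀ k (S : Fin (2^k) → Bool) (ξ : Fin p → Fin (2^k) → Bool),
      cpart σ k * (∑ μ, m μ * ∑ i, spin (ξ μ i) * spin (S i))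
        - 2^k / 2 * cpart σ k * ∑ μ, (m μ)^2 ≤ - hopH σ p k S ξ := by
  intro k
  induction k with
  | zero => intro S ξ; simp [hopH, cpart]
  | succ k IH =>
    intro S ξ
    set T : ℝ := (2 : ℝ) ^ (2 * σ * ((k : ℝ) + 1)) with hT
    have hTpos : 0 < T := Real.rpow_pos_of_pos (by norm_num) _
    set d : ℝ := crate σ ^ (k+1) with hd
    have hdT : d = (2:ℝ)^(k+1) / T := crate_pow σ k
    set XL : Fin p → ℝ := fun μ => ∑ i : Fin (2^k), spin (ξ μ (finLeft i)) * spin (S (finLeft i)) with hXL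
    set XR : Fin p → ℝ := fun μ => ∑ i : Fin (2^k), spin (ξ μ (finRight i)) * spin (S (finRight i)) with hXR
    set X : Fin p → ℝ := fun μ => ∑ i : Fin (2^(k+1)), spin (ξ μ i) * spin (S i) with hX
    have hsplit : ∀ μ, X μ = XL μ + XR μ := fun μ =>
      sum_split (fun i => spin (ξ μ i) * spin (S i))
    have hc : cpart σ (k+1) = cpart σ k + d := Finset.sum_range_succ _ _
    have IH1 := IH (fun i => S (finLeft i)) (fun μ i => ξ μ (finLeft i))
    have IH2 := IH (fun i => S (finRight i)) (fun μ i => ξ μ (finRight i))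
    -- the quadratic term bound
    have hquad : ∀ μ : Fin p, d * (m μ * X μ) - 2^k * d * (m μ)^2
        ≤ 1 / (2*T) * (X μ)^2 := by
      intro μ
      have key : 1 / (2*T) * (X μ)^2 - (d * (m μ * X μ) - 2^k * d * (m μ)^2)
          = 1 / (2*T) * (X μ - m μ * 2^(k+1))^2 := by
        rw [hdT]
        field_simp
        ring
      nlinarith [sq_nonneg (X μ - m μ * 2^(k+1)), mul_pos (by norm_num : (0:ℝ) < 2) hTpos,
        mul_nonneg (le_of_lt (by positivity : (0:ℝ) < 1/(2*T))) (sq_nonneg (X μ - m μ * 2^(k+1)))]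
    have hquadsum : d * (∑ μ, m μ * X μ) - 2^k * d * (∑ μ, (m μ)^2)
        ≤ 1 / (2*T) * ∑ μ, (X μ)^2 := by
      rw [Finset.mul_sum, Finset.mul_sum, Finset.mul_sum, ← Finset.sum_sub_distrib]
      exact Finset.sum_le_sum fun μ _ => hquad μ
    have hH : - hopH σ p (k+1) S ξ =
        (- hopH σ p k (fun i => S (finLeft i)) (fun μ i => ξ μ (finLeft i)))
        + (- hopH σ p k (fun i => S (finRight i)) (fun μ i => ξ μ (finRight i)))
        + 1 / (2*T) * ∑ μ, (X μ)^2 := by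
      rw [hopH]
      simp_rw [double_sum_sq]
      ring
    rw [hH]
    have hmX : (∑ μ, m μ * X μ) = (∑ μ, m μ * XL μ) + (∑ μ, m μ * XR μ) := by
      rw [← Finset.sum_add_distrib]
      exact Finset.sum_congr rfl fun μ _ => by rw [hsplit μ]; ring
    have e2 : (2:ℝ)^(k+1) = 2 * 2^k := by ring
    calc cpart σ (k+1) * (∑ μ, m μ * X μ) - 2^(k+1) / 2 * cpart σ (k+1) * ∑ μ, (m μ)^2
        = (cpart σ k * (∑ μ, m μ * XL μ) - 2^k / 2 * cpart σ k * ∑ μ, (m μ)^2)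
          + (cpart σ k * (∑ μ, m μ * XR μ) - 2^k / 2 * cpart σ k * ∑ μ, (m μ)^2)
          + (d * (∑ μ, m μ * X μ) - 2^k * d * (∑ μ, (m μ)^2)) := by
            rw [hc, hmX, e2]; ring
      _ ≤ _ := by
            exact add_le_add (add_le_add IH1 IH2) hquadsum

lemma logZ_bound (σ β : ℝ) (hβ : 0 < β) (p k : ℕ) (h m1 m2 : Fin p → ℝ)
    (ξ : Fin p → Fin (2^(k+1)) → Bool) :
    (2:ℝ)^(k+1) * Real.log 2
      + (∑ j : Fin (2^(k+1)), Real.log (Real.cosh (β * ∑ μ,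
          (h μ + cpart σ k * (if (j:ℕ) < 2^k then m1 μ else m2 μ)) * spin (ξ μ j))))
      - β * (2^k/2 * cpart σ k * ((∑ μ, (m1 μ)^2) + (∑ μ, (m2 μ)^2)))
    ≤ Real.log (∑ S : Fin (2^(k+1)) → Bool,
        Real.exp (-β * hopH σ p (k+1) S ξ
          + β * ∑ μ, h μ * ∑ i, spin (ξ μ i) * spin (S i))) := by
  set c := cpart σ k with hcdef
  set ψ : Fin (2^(k+1)) → ℝ := fun j =>
    ∑ μ, (h μ + c * (if (j:ℕ) < 2^k then m1 μ else m2 μ)) * spin (ξ μ j) with hψ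
  set Q : ℝ := 2^k/2 * c * ((∑ μ, (m1 μ)^2) + (∑ μ, (m2 μ)^2)) with hQ
  -- per-configuration exponent bound
  have expo : ∀ S : Fin (2^(k+1)) → Bool,
      (∑ j, (β * ψ j) * spin (S j)) - β * Q
        ≤ -β * hopH σ p (k+1) S ξ + β * ∑ μ, h μ * ∑ i, spin (ξ μ i) * spin (S i) := by
    intro S
    set XL : Fin p → ℝ := fun μ => ∑ i : Fin (2^k), spin (ξ μ (finLeft i)) * spin (S (finLeft i)) with hXL
    set XR : Fin p → ℝ := fun μ => ∑ i : Fin (2^k), spin (ξ μ (finRight i)) * spin (S (finRight i)) with hXR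
    have hL := lemA σ p m1 k (fun i => S (finLeft i)) (fun μ i => ξ μ (finLeft i))
    have hR := lemA σ p m2 k (fun i => S (finRight i)) (fun μ i => ξ μ (finRight i))
    have hquadpos : 0 ≤ 1 / (2 * (2 : ℝ) ^ (2 * σ * ((k : ℝ) + 1))) *
        ∑ μ : Fin p, ∑ i : Fin (2 ^ (k + 1)), ∑ j : Fin (2 ^ (k + 1)),
          spin (ξ μ i) * spin (ξ μ j) * spin (S i) * spin (S j) := by
      apply mul_nonneg
      · have : (0:ℝ) < (2 : ℝ) ^ (2 * σ * ((k : ℝ) + 1)) := Real.rpow_pos_of_pos (by norm_num) _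
        positivity
      · apply Finset.sum_nonneg
        intro μ _
        rw [double_sum_sq]
        exact sq_nonneg _
    have hHop : c * (∑ μ, m1 μ * XL μ) + c * (∑ μ, m2 μ * XR μ) - Q
        ≤ - hopH σ p (k+1) S ξ := by
      rw [hopH]
      have e : - (hopH σ p k (fun i => S (finLeft i)) (fun μ i => ξ μ (finLeft i)) +
          hopH σ p k (fun i => S (finRight i)) (fun μ i => ξ μ (finRight i)) -
          1 / (2 * (2 : ℝ) ^ (2 * σ * ((k : ℝ) + 1))) * ∑ μ : Fin p, ∑ i, ∑ j,
            spin (ξ μ i) * spin (ξ μ j) * spin (S i) * spin (S j)) =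
          (- hopH σ p k (fun i => S (finLeft i)) (fun μ i => ξ μ (finLeft i))) +
          (- hopH σ p k (fun i => S (finRight i)) (fun μ i => ξ μ (finRight i))) +
          1 / (2 * (2 : ℝ) ^ (2 * σ * ((k : ℝ) + 1))) * ∑ μ : Fin p, ∑ i, ∑ j,
            spin (ξ μ i) * spin (ξ μ j) * spin (S i) * spin (S j) := by ring
      rw [e, hQ]
      have := add_le_add (add_le_add hL hR) hquadpos
      linarith [this]
    -- identity for the ψ sum
    have hid : (∑ j, ψ j * spin (S j)) =
        (∑ μ, h μ * ∑ i, spin (ξ μ i) * spin (S i))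
          + (c * (∑ μ, m1 μ * XL μ) + c * (∑ μ, m2 μ * XR μ)) := by
      rw [sum_split (fun j => ψ j * spin (S j))]
      have eL : ∀ i : Fin (2^k), ψ (finLeft i) * spin (S (finLeft i)) =
          ∑ μ, (h μ + c * m1 μ) * (spin (ξ μ (finLeft i)) * spin (S (finLeft i))) := by
        intro i
        have : ((finLeft i : Fin (2^(k+1))) : ℕ) < 2^k := i.2
        rw [hψ]
        simp only [this, if_pos, Finset.sum_mul]
        exact Finset.sum_congr rfl fun μ _ => by ring
      have eR : ∀ i : Fin (2^k), ψ (finRight i) * spin (S (finRight i)) =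
          ∑ μ, (h μ + c * m2 μ) * (spin (ξ μ (finRight i)) * spin (S (finRight i))) := by
        intro i
        have : ¬ ((finRight i : Fin (2^(k+1))) : ℕ) < 2^k := by
          simp [finRight]
        rw [hψ]
        simp only [this, if_neg, if_false, Finset.sum_mul]
        exact Finset.sum_congr rfl fun μ _ => by ring
      simp_rw [eL, eR]
      have swapL : (∑ i : Fin (2^k), ∑ μ, (h μ + c * m1 μ) *
          (spin (ξ μ (finLeft i)) * spin (S (finLeft i))))
          = ∑ μ, (h μ + c * m1 μ) * XL μ := by
        rw [Finset.sum_comm]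
        exact Finset.sum_congr rfl fun μ _ => by rw [← Finset.mul_sum]
      have swapR : (∑ i : Fin (2^k), ∑ μ, (h μ + c * m2 μ) *
          (spin (ξ μ (finRight i)) * spin (S (finRight i))))
          = ∑ μ, (h μ + c * m2 μ) * XR μ := by
        rw [Finset.sum_comm]
        exact Finset.sum_congr rfl fun μ _ => by rw [← Finset.mul_sum]
      rw [swapL, swapR]
      have hXf : ∀ μ : Fin p, (∑ i : Fin (2^(k+1)), spin (ξ μ i) * spin (S i)) = XL μ + XR μ :=
        fun μ => sum_split _
      simp_rw [hXf]
      rw [← Finset.sum_add_distrib]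
      conv_rhs => rw [Finset.mul_sum, Finset.mul_sum, ← Finset.sum_add_distrib,
        ← Finset.sum_add_distrib]
      exact Finset.sum_congr rfl fun μ _ => by ring
    have := hHop
    have goal1 : (∑ j, (β * ψ j) * spin (S j)) = β * ∑ j, ψ j * spin (S j) := by
      rw [Finset.mul_sum]; exact Finset.sum_congr rfl fun j _ => by ring
    rw [goal1, hid]
    nlinarith [hHop, hβ]
  -- sum over configurations
  have hZ : Real.exp (-(β * Q)) * ∏ j : Fin (2^(k+1)), (2 * Real.cosh (β * ψ j))
      ≤ ∑ S : Fin (2^(k+1)) → Bool,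
        Real.exp (-β * hopH σ p (k+1) S ξ
          + β * ∑ μ, h μ * ∑ i, spin (ξ μ i) * spin (S i)) := by
    rw [← sum_exp_spin (fun j => β * ψ j), Finset.mul_sum]
    apply Finset.sum_le_sum
    intro S _
    rw [← Real.exp_add]
    exact Real.exp_le_exp.mpr (by linarith [expo S])
  have hcoshpos : ∀ j : Fin (2^(k+1)), (0:ℝ) < 2 * Real.cosh (β * ψ j) := fun j => by
    have := Real.cosh_pos (β * ψ j); linarith
  have hprodpos : (0:ℝ) < ∏ j : Fin (2^(k+1)), (2 * Real.cosh (β * ψ j)) :=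
    Finset.prod_pos fun j _ => hcoshpos j
  have hApos : (0:ℝ) < Real.exp (-(β * Q)) * ∏ j : Fin (2^(k+1)), (2 * Real.cosh (β * ψ j)) :=
    mul_pos (Real.exp_pos _) hprodpos
  have hlog := Real.log_le_log hApos hZ
  have hlogA : Real.log (Real.exp (-(β * Q)) * ∏ j : Fin (2^(k+1)), (2 * Real.cosh (β * ψ j)))
      = -(β * Q) + ((2:ℝ)^(k+1) * Real.log 2 + ∑ j : Fin (2^(k+1)), Real.log (Real.cosh (β * ψ j))) := by
    rw [Real.log_mul (Real.exp_ne_zero _) hprodpos.ne', Real.log_exp,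
      Real.log_prod (fun j _ => (hcoshpos j).ne')]
    have : ∀ j : Fin (2^(k+1)), Real.log (2 * Real.cosh (β * ψ j))
        = Real.log 2 + Real.log (Real.cosh (β * ψ j)) := fun j =>
      Real.log_mul (by norm_num) (Real.cosh_pos _).ne'
    simp_rw [this, Finset.sum_add_distrib, Finset.sum_const, Finset.card_univ,
      Fintype.card_fin, nsmul_eq_mul]
    push_cast
    ring
  rw [hlogA] at hlog
  linarith [hlog]

lemma hopF_bound (σ β : ℝ) (hβ : 0 < β) (p k : ℕ) (h m1 m2 : Fin p → ℝ) :
    Real.log 2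
      + (1 / 2) * (((2 : ℝ) ^ p)⁻¹ * ∑ η : Fin p → Bool,
          Real.log (Real.cosh (β * ∑ μ, (h μ + cpart σ k * m1 μ) * spin (η μ))))
      + (1 / 2) * (((2 : ℝ) ^ p)⁻¹ * ∑ η : Fin p → Bool,
          Real.log (Real.cosh (β * ∑ μ, (h μ + cpart σ k * m2 μ) * spin (η μ))))
      - β * cpart σ k / 2 * ∑ μ, ((m1 μ) ^ 2 + (m2 μ) ^ 2) / 2
    ≤ hopF β σ p h (k+1) := by
  set c := cpart σ k with hcdef
  set Q : ℝ := 2^k/2 * c * ((∑ μ, (m1 μ)^2) + (∑ μ, (m2 μ)^2)) with hQ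
  set SL : ℝ := ∑ η : Fin p → Bool,
      Real.log (Real.cosh (β * ∑ μ, (h μ + c * m1 μ) * spin (η μ))) with hSL
  set SR : ℝ := ∑ η : Fin p → Bool,
      Real.log (Real.cosh (β * ∑ μ, (h μ + c * m2 μ) * spin (η μ))) with hSR
  -- the ξ-average of the per-site log-cosh sum
  have inner : (∑ ξ : Fin p → Fin (2^(k+1)) → Bool, ∑ j : Fin (2^(k+1)),
        Real.log (Real.cosh (β * ∑ μ,
          (h μ + c * (if (j:ℕ) < 2^k then m1 μ else m2 μ)) * spin (ξ μ j))))
      = (2:ℝ)^(p*(2^(k+1)-1)) * 2^k * (SL + SR) := by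
    rw [Finset.sum_comm]
    have perj : ∀ j : Fin (2^(k+1)), (∑ ξ : Fin p → Fin (2^(k+1)) → Bool,
        Real.log (Real.cosh (β * ∑ μ,
          (h μ + c * (if (j:ℕ) < 2^k then m1 μ else m2 μ)) * spin (ξ μ j))))
        = (2:ℝ)^(p*(2^(k+1)-1)) * ∑ η : Fin p → Bool,
            Real.log (Real.cosh (β * ∑ μ,
              (h μ + c * (if (j:ℕ) < 2^k then m1 μ else m2 μ)) * spin (η μ))) :=
      fun j => avg_site j (fun η => Real.log (Real.cosh (β * ∑ μ,
        (h μ + c * (if (j:ℕ) < 2^k then m1 μ else m2 μ)) * spin (η μ))))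
    simp_rw [perj]
    rw [sum_split (fun j => (2:ℝ)^(p*(2^(k+1)-1)) * ∑ η : Fin p → Bool,
      Real.log (Real.cosh (β * ∑ μ,
        (h μ + c * (if (j:ℕ) < 2^k then m1 μ else m2 μ)) * spin (η μ))))]
    have eL : ∀ i : Fin (2^k), ((2:ℝ)^(p*(2^(k+1)-1)) * ∑ η : Fin p → Bool,
        Real.log (Real.cosh (β * ∑ μ,
          (h μ + c * (if ((finLeft i : Fin (2^(k+1))):ℕ) < 2^k then m1 μ else m2 μ)) * spin (η μ))))
        = (2:ℝ)^(p*(2^(k+1)-1)) * SL := by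
      intro i
      have hi : ((finLeft i : Fin (2^(k+1))):ℕ) < 2^k := i.2
      simp only [hi, if_pos, hSL]
    have eR : ∀ i : Fin (2^k), ((2:ℝ)^(p*(2^(k+1)-1)) * ∑ η : Fin p → Bool,
        Real.log (Real.cosh (β * ∑ μ,
          (h μ + c * (if ((finRight i : Fin (2^(k+1))):ℕ) < 2^k then m1 μ else m2 μ)) * spin (η μ))))
        = (2:ℝ)^(p*(2^(k+1)-1)) * SR := by
      intro i
      have hi : ¬ ((finRight i : Fin (2^(k+1))):ℕ) < 2^k := by simp [finRight]
      simp only [hi, if_neg, if_false, hSR]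
    simp_rw [eL, eR]
    simp only [Finset.sum_const, Finset.card_univ, Fintype.card_fin, nsmul_eq_mul]
    push_cast
    ring
  -- cardinality of the pattern space
  have hcard : (Fintype.card (Fin p → Fin (2^(k+1)) → Bool)) = 2^(p * 2^(k+1)) := by
    simp only [Fintype.card_fun, Fintype.card_bool, Fintype.card_fin]
    rw [← pow_mul, mul_comm]
  -- sum of the lower bounds
  have sumA : (∑ ξ : Fin p → Fin (2^(k+1)) → Bool,
        ((2:ℝ)^(k+1) * Real.log 2
          + (∑ j : Fin (2^(k+1)), Real.log (Real.cosh (β * ∑ μ,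
              (h μ + c * (if (j:ℕ) < 2^k then m1 μ else m2 μ)) * spin (ξ μ j))))
          - β * Q))
      = (2:ℝ)^(p * 2^(k+1)) * ((2:ℝ)^(k+1) * Real.log 2 - β * Q)
        + (2:ℝ)^(p*(2^(k+1)-1)) * 2^k * (SL + SR) := by
    rw [Finset.sum_sub_distrib, Finset.sum_add_distrib, inner, Finset.sum_const,
      Finset.sum_const, Finset.card_univ, hcard, nsmul_eq_mul, nsmul_eq_mul]
    push_cast
    ring
  have mono : (∑ ξ : Fin p → Fin (2^(k+1)) → Bool,
        ((2:ℝ)^(k+1) * Real.log 2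
          + (∑ j : Fin (2^(k+1)), Real.log (Real.cosh (β * ∑ μ,
              (h μ + c * (if (j:ℕ) < 2^k then m1 μ else m2 μ)) * spin (ξ μ j))))
          - β * Q))
      ≤ ∑ ξ : Fin p → Fin (2^(k+1)) → Bool,
          Real.log (∑ S : Fin (2^(k+1)) → Bool,
            Real.exp (-β * hopH σ p (k+1) S ξ
              + β * ∑ μ, h μ * ∑ i, spin (ξ μ i) * spin (S i))) :=
    Finset.sum_le_sum fun ξ _ => logZ_bound σ β hβ p k h m1 m2 ξ
  rw [sumA] at mono
  rw [hopF]
  have h1 : (0:ℝ) < (2:ℝ)^(k+1) := by positivity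
  have h2 : (0:ℝ) < (2:ℝ)^(p * 2^(k+1)) := by positivity
  have step : ((2:ℝ)^(k+1))⁻¹ * (((2:ℝ)^(p * 2^(k+1)))⁻¹ *
        ((2:ℝ)^(p * 2^(k+1)) * ((2:ℝ)^(k+1) * Real.log 2 - β * Q)
          + (2:ℝ)^(p*(2^(k+1)-1)) * 2^k * (SL + SR)))
      ≤ ((2:ℝ)^(k+1))⁻¹ * (((2:ℝ)^(p * 2^(k+1)))⁻¹ *
        ∑ ξ : Fin p → Fin (2^(k+1)) → Bool,
          Real.log (∑ S : Fin (2^(k+1)) → Bool,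
            Real.exp (-β * hopH σ p (k+1) S ξ
              + β * ∑ μ, h μ * ∑ i, spin (ξ μ i) * spin (S i)))) := by
    apply mul_le_mul_of_nonneg_left _ (by positivity)
    exact mul_le_mul_of_nonneg_left mono (by positivity)
  refine le_trans (le_of_eq ?_) step
  -- arithmetic identity
  have hsplitpow : (2:ℝ)^(p * 2^(k+1)) = (2:ℝ)^p * (2:ℝ)^(p*(2^(k+1)-1)) := by
    rw [← pow_add]
    congr 1
    have h1 : 2^(k+1) = 1 + (2^(k+1) - 1) := by
      have : 1 ≤ 2^(k+1) := Nat.one_le_two_pow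
      omega
    conv_lhs => rw [h1]
    rw [Nat.mul_add, Nat.mul_one]
  have hsum2 : (∑ μ, ((m1 μ)^2 + (m2 μ)^2)/2)
      = ((∑ μ, (m1 μ)^2) + ∑ μ, (m2 μ)^2)/2 := by
    rw [← Finset.sum_div, Finset.sum_add_distrib]
  rw [hsum2, hsplitpow, hQ]
  have e2 : (2:ℝ)^(k+1) = 2 * 2^k := by ring
  rw [e2]
  have hk : ((2:ℝ)^k) ≠ 0 := by positivity
  have hp2 : ((2:ℝ)^p) ≠ 0 := by positivity
  have ha : ((2:ℝ)^(p*(2^(k+1)-1))) ≠ 0 := by positivity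
  field_simp
  ring

end Aux

/-- mean-field bound for parallel retrieval in the HHM. -/
theorem hopfield_mean_field_parallel_bound (p : ℕ) (hp : 1 ≤ p) (β σ : ℝ) (h : Fin p → ℝ)
    (hβ : 0 < β) (hσ : σ ∈ Set.Ioo (1 / 2 : ℝ) 1) (m1 m2 : Fin p → ℝ)
    (hm1 : ∀ μ, m1 μ ∈ Set.Icc (-1 : ℝ) 1) (hm2 : ∀ μ, m2 μ ∈ Set.Icc (-1 : ℝ) 1) (F : ℝ)
    (hF : Tendsto (fun k => hopF β σ p h k) atTop (nhds F)) :
    F ≥ Real.log 2 +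
        (1 / 2) * (((2 : ℝ) ^ p)⁻¹ *
          ∑ ξ : Fin p → Bool,
            Real.log (Real.cosh (β * ∑ μ, (h μ + Cconst (2 * σ - 1) * m1 μ) * spin (ξ μ)))) +
        (1 / 2) * (((2 : ℝ) ^ p)⁻¹ *
          ∑ ξ : Fin p → Bool,
            Real.log (Real.cosh (β * ∑ μ, (h μ + Cconst (2 * σ - 1) * m2 μ) * spin (ξ μ)))) -
        β * Cconst (2 * σ - 1) / 2 * ∑ μ, ((m1 μ) ^ 2 + (m2 μ) ^ 2) / 2 := by
  obtain ⟨hσ1, hσ2⟩ := hσ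
  set r : ℝ := crate σ with hr
  have hr0 : 0 < r := Real.rpow_pos_of_pos (by norm_num) _
  have hr1 : r < 1 := by
    apply Real.rpow_lt_one_of_one_lt_of_neg (by norm_num)
    linarith
  have hC : Cconst (2 * σ - 1) = r / (1 - r) := by
    rw [Cconst, hr, crate]
    rw [show -(2 * σ - 1) = (1:ℝ) - 2 * σ by ring]
  -- convergence of the partial geometric sums
  have hgeo : Tendsto (fun k => cpart σ k) atTop (nhds (Cconst (2 * σ - 1))) := by
    have hs : HasSum (fun n : ℕ => r * r ^ n) (r * (1 - r)⁻¹) :=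
      (hasSum_geometric_of_lt_one hr0.le hr1).mul_left r
    have := hs.tendsto_sum_nat
    have heq : ∀ k : ℕ, (∑ l ∈ Finset.range k, r * r ^ l) = cpart σ k := by
      intro k
      rw [cpart]
      exact Finset.sum_congr rfl fun l _ => by rw [pow_succ]; ring
    simp_rw [heq] at this
    rw [hC, div_eq_mul_inv]
    exact this
  -- the bound function
  set Rfun : ℝ → ℝ := fun c =>
    Real.log 2 +
      (1 / 2) * (((2 : ℝ) ^ p)⁻¹ *
        ∑ ξ : Fin p → Bool,
          Real.log (Real.cosh (β * ∑ μ, (h μ + c * m1 μ) * spin (ξ μ)))) +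
      (1 / 2) * (((2 : ℝ) ^ p)⁻¹ *
        ∑ ξ : Fin p → Bool,
          Real.log (Real.cosh (β * ∑ μ, (h μ + c * m2 μ) * spin (ξ μ)))) -
      β * c / 2 * ∑ μ, ((m1 μ) ^ 2 + (m2 μ) ^ 2) / 2 with hRfun
  have hlogcosh : Continuous fun x : ℝ => Real.log (Real.cosh x) :=
    Real.continuous_cosh.log fun x => (Real.cosh_pos x).ne'
  have hcont : Continuous Rfun := by
    rw [hRfun]
    apply Continuous.sub
    · apply Continuous.add
      apply Continuous.add continuous_const
      · apply Continuous.mul continuous_const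
        apply Continuous.mul continuous_const
        apply continuous_finset_sum
        intro η _
        exact hlogcosh.comp (continuous_const.mul (continuous_finset_sum _ fun μ _ =>
          (continuous_const.add (continuous_id.mul continuous_const)).mul continuous_const))
      · apply Continuous.mul continuous_const
        apply Continuous.mul continuous_const
        apply continuous_finset_sum
        intro η _
        exact hlogcosh.comp (continuous_const.mul (continuous_finset_sum _ fun μ _ =>
          (continuous_const.add (continuous_id.mul continuous_const)).mul continuous_const))
    · exact (((continuous_const.mul (continuous_id : Continuous fun x : ℝ => x)).div_const
        2).mul continuous_const)
  have hRt : Tendsto (fun k => Rfun (cpart σ k)) atTop (nhds (Rfun (Cconst (2 * σ - 1)))) :=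
    (hcont.tendsto _).comp hgeo
  have hFt : Tendsto (fun k : ℕ => hopF β σ p h (k + 1)) atTop (nhds F) :=
    hF.comp (tendsto_add_atTop_nat 1)
  have hle : ∀ k : ℕ, Rfun (cpart σ k) ≤ hopF β σ p h (k + 1) := fun k =>
    hopF_bound σ β hβ p k h m1 m2
  exact le_of_tendsto_of_tendsto' hRt hFt hle
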